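/- For m ≥ 3, the complete simple game with class sizes n = (2, m, m) and shift-minimal winning coalition types w_1 = (2, 0, 1) and w_2 = (1, 1, m-1) is not m-invariant trade robust: with maximal losing types l_1 = (2,0,0), l_2 = (1,0,m), l_4 = (0,m,m), the identity m·w_2 = 1·l_1 + (m-2)·l_2 + 1·l_4 holds componentwise, giving a trading transform of length m from m copies of the winning type w_2 to losing types. -/
import Mathlib


/-- Dominance (partial-sums order) for coalition types with three classes. -/
def Dom3 (s w : ℕ × ℕ × ℕ) : Prop :=
  w.1 ≤ s.1 ∧ w.1 + w.2.1 ≤ s.1 + s.2.1 ∧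
    w.1 + w.2.1 + w.2.2 ≤ s.1 + s.2.1 + s.2.2

/-- For `m ≥ 3`, the complete simple game with class sizes `(2, m, m)` and
shift-minimal winning types `(2,0,1)`, `(1,1,m-1)` is not `m`-invariant trade
robust: `m·w2 = l1 + (m-2)·l2 + l4` with `l1, l2, l4` losing. -/
theorem stmt15 (m : ℕ) (hm : 3 ≤ m) :
    let w2 : ℕ × ℕ × ℕ := (1, 1, m - 1)
    let Win : ℕ × ℕ × ℕ → Prop := fun s => Dom3 s (2, 0, 1) ∨ Dom3 s w2
    let l1 : ℕ × ℕ × ℕ := (2, 0, 0)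
    let l2 : ℕ × ℕ × ℕ := (1, 0, m)
    let l4 : ℕ × ℕ × ℕ := (0, m, m)
    (l1.1 ≤ 2 ∧ l1.2.1 ≤ m ∧ l1.2.2 ≤ m) ∧
      (l2.1 ≤ 2 ∧ l2.2.1 ≤ m ∧ l2.2.2 ≤ m) ∧
      (l4.1 ≤ 2 ∧ l4.2.1 ≤ m ∧ l4.2.2 ≤ m) ∧
      ¬ Win l1 ∧ ¬ Win l2 ∧ ¬ Win l4 ∧
      m * w2.1 = 1 * l1.1 + (m - 2) * l2.1 + 1 * l4.1 ∧
      m * w2.2.1 = 1 * l1.2.1 + (m - 2) * l2.2.1 + 1 * l4.2.1 ∧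
      m * w2.2.2 = 1 * l1.2.2 + (m - 2) * l2.2.2 + 1 * l4.2.2 ∧
      1 + (m - 2) + 1 = m := by
  intro w2 Win l1 l2 l4
  simp only [Dom3, Win, w2, l1, l2, l4]
  obtain ⟨k, rfl⟩ : ∃ k, m = k + 3 := ⟨m - 3, by omega⟩
  refine ⟨by omega, by omega, by omega, ?_, ?_, ?_, by omega, by omega, ?_, by omega⟩
  · simp only [not_or, Dom3]; omega
  · simp only [not_or, Dom3]; omega
  · simp only [not_or, Dom3]; omega
  · have e1 : k + 3 - 1 = k + 2 := by omega
    have e2 : k + 3 - 2 = k + 1 := by omega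
    rw [e1, e2]; ring
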